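/- Let k be a nonnegative integer, let U, V ⊆ ℝ^n be open sets, and let u, v : ℝ^n → ℝ^p be maps of class C^k on U. Assume that for every point b ∈ U lying in the frontier of V and every i with 0 ≤ i ≤ k, the i-th iterated derivative of u at b equals the i-th iterated derivative of v at b. Then the map w : U → ℝ^p defined by w(x) = u(x) if x belongs to the closure of V and w(x) = v(x) otherwise, is of class C^k on U. -/

import Mathlib

open Classical

open Filter Asymptotics Topology Set

private theorem tendsto_if_both {α β : Type*} [TopologicalSpace β] {P : α → Prop}
    [DecidablePred P] {f g : α → β} {l : Filter α} {b : β}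
    (hf : Tendsto f l (𝓝 b)) (hg : Tendsto g l (𝓝 b)) :
    Tendsto (fun x => if P x then f x else g x) l (𝓝 b) := by
  intro s hs
  rw [Filter.mem_map]
  filter_upwards [hf hs, hg hs] with x h1 h2
  simp only [Set.mem_preimage] at h1 h2 ⊢
  split <;> assumption

private theorem hasFDerivWithinAt_if' {E F : Type*} [NormedAddCommGroup E] [NormedSpace ℝ E]
    [NormedAddCommGroup F] [NormedSpace ℝ F] {P : E → Prop} [DecidablePred P]
    {f g : E → F} {L : E →L[ℝ] F} {s : Set E} {x : E} (hPx : P x) (hfg : g x = f x)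
    (hf : HasFDerivWithinAt f L s x) (hg : HasFDerivWithinAt g L s x) :
    HasFDerivWithinAt (fun y => if P y then f y else g y) L s x := by
  have hf' := hasFDerivWithinAt_iff_isLittleO.mp hf
  have hg' := hasFDerivWithinAt_iff_isLittleO.mp hg
  rw [hfg] at hg'
  refine hasFDerivWithinAt_iff_isLittleO.mpr ?_
  simp only [if_pos hPx]
  rw [Asymptotics.isLittleO_iff] at hf' hg' ⊢
  intro c hc
  filter_upwards [hf' hc, hg' hc] with y h1 h2
  by_cases h : P y
  · simpa [h] using h1
  · simpa [h] using h2

/-- If `u, v : ℝⁿ → ℝ^p` are of class `C^k` on an open set `U` and their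
iterated derivatives up to order `k` agree at every point of `U ∩ frontier V` (for an open
set `V`), then the map equal to `u` on the closure of `V` and to `v` elsewhere is of class
`C^k` on `U`. -/
theorem stmt13 (n p k : ℕ) (U V : Set (Fin n → ℝ)) (hU : IsOpen U) (hV : IsOpen V)
    (u v : (Fin n → ℝ) → (Fin p → ℝ))
    (hu : ContDiffOn ℝ k u U) (hv : ContDiffOn ℝ k v U)
    (hagree : ∀ b ∈ U ∩ frontier V, ∀ i : ℕ, i ≤ k →
      iteratedFDeriv ℝ i u b = iteratedFDeriv ℝ i v b) :
    ContDiffOn ℝ k (fun x => if x ∈ closure V then u x else v x) U := by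
  have hUD : UniqueDiffOn ℝ U := hU.uniqueDiffOn
  set P := ftaylorSeriesWithin ℝ u U with hPdef
  set Q := ftaylorSeriesWithin ℝ v U with hQdef
  have hP : HasFTaylorSeriesUpToOn (k : ℕ∞) u P U := hu.ftaylorSeriesWithin hUD
  have hQ : HasFTaylorSeriesUpToOn (k : ℕ∞) v Q U := hv.ftaylorSeriesWithin hUD
  have hag : ∀ b ∈ U, b ∈ frontier V → ∀ i : ℕ, i ≤ k → P b i = Q b i := by
    intro b hb hbf i hi
    have h1 : P b i = iteratedFDeriv ℝ i u b := iteratedFDerivWithin_of_isOpen i hU hb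
    have h2 : Q b i = iteratedFDeriv ℝ i v b := iteratedFDerivWithin_of_isOpen i hU hb
    rw [h1, h2]
    exact hagree b ⟨hb, hbf⟩ i hi
  have key : HasFTaylorSeriesUpToOn (k : ℕ∞) (fun x => if x ∈ closure V then u x else v x)
      (fun x m => if x ∈ closure V then P x m else Q x m) U := by
    constructor
    · intro x hx
      by_cases h : x ∈ closure V
      · simp only [h, if_true]
        exact hP.zero_eq x hx
      · simp only [h, if_false]
        exact hQ.zero_eq x hx
    · intro m hm x hx
      have hmk : m < k := by exact_mod_cast hm
      by_cases hxV : x ∈ V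
      · have hxc : x ∈ closure V := subset_closure hxV
        have heq : (fun y => if y ∈ closure V then P y m else Q y m) =ᶠ[𝓝[U] x] (P · m) := by
          filter_upwards [nhdsWithin_le_nhds (hV.mem_nhds hxV)] with y hy
          simp [subset_closure hy]
        rw [if_pos hxc]
        exact (hP.fderivWithin m hm x hx).congr_of_eventuallyEq heq (by simp [hxc])
      · by_cases hxc : x ∈ closure V
        · -- frontier point
          have hxf : x ∈ frontier V := by
            rw [hV.frontier_eq]; exact ⟨hxc, hxV⟩
          have e1 : Q x m = P x m := (hag x hx hxf m hmk.le).symm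
          have e2 : Q x (m + 1) = P x (m + 1) := (hag x hx hxf (m + 1) hmk).symm
          rw [if_pos hxc]
          refine hasFDerivWithinAt_if' hxc e1 (hP.fderivWithin m hm x hx) ?_
          have := hQ.fderivWithin m hm x hx
          rwa [e2] at this
        · have heq : (fun y => if y ∈ closure V then P y m else Q y m) =ᶠ[𝓝[U] x] (Q · m) := by
            filter_upwards [nhdsWithin_le_nhds (isClosed_closure.isOpen_compl.mem_nhds hxc)]
              with y hy
            exact if_neg hy
          rw [if_neg hxc]
          exact (hQ.fderivWithin m hm x hx).congr_of_eventuallyEq heq (by simp [hxc])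
    · intro m hm x hx
      have hmk : m ≤ k := by exact_mod_cast hm
      by_cases hxV : x ∈ V
      · have hxc : x ∈ closure V := subset_closure hxV
        have heq : (fun y => if y ∈ closure V then P y m else Q y m) =ᶠ[𝓝[U] x] (P · m) := by
          filter_upwards [nhdsWithin_le_nhds (hV.mem_nhds hxV)] with y hy
          simp [subset_closure hy]
        exact (hP.cont m hm x hx).congr_of_eventuallyEq heq (by simp [hxc])
      · by_cases hxc : x ∈ closure V
        · have hxf : x ∈ frontier V := by
            rw [hV.frontier_eq]; exact ⟨hxc, hxV⟩
          have e1 : Q x m = P x m := (hag x hx hxf m hmk).symm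
          have h1 : Tendsto (P · m) (𝓝[U] x) (𝓝 (P x m)) := hP.cont m hm x hx
          have h2 : Tendsto (Q · m) (𝓝[U] x) (𝓝 (P x m)) := by
            have := hQ.cont m hm x hx
            rwa [show ContinuousWithinAt (Q · m) U x ↔
              Tendsto (Q · m) (𝓝[U] x) (𝓝 (Q x m)) from Iff.rfl, e1] at this
          have : Tendsto (fun y => if y ∈ closure V then P y m else Q y m)
              (𝓝[U] x) (𝓝 (P x m)) := tendsto_if_both h1 h2
          show Tendsto (fun x => if x ∈ closure V then P x m else Q x m) (𝓝[U] x)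
            (𝓝 (if x ∈ closure V then P x m else Q x m))
          rwa [if_pos hxc]
        · have heq : (fun y => if y ∈ closure V then P y m else Q y m) =ᶠ[𝓝[U] x] (Q · m) := by
            filter_upwards [nhdsWithin_le_nhds (isClosed_closure.isOpen_compl.mem_nhds hxc)]
              with y hy
            exact if_neg hy
          exact (hQ.cont m hm x hx).congr_of_eventuallyEq heq (by simp [hxc])
  exact key.contDiffOn
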